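/- There exists an infinite sequence X over the binary alphabet Σ = {0,1} such that dim_FS(X) > (1/2)·( dim_FS(A_{2,0}) + dim_FS^{A_{2,0}}(A_{2,1}) ); in fact one can take X with dim_FS(X) = 1/2, dim_FS(A_{2,0}) = 0 and dim_FS^{A_{2,0}}(A_{2,1}) = 0. -/

import Mathlib

open Filter

/-- A finite-state gambler over alphabet `α` with state space `Fin (m+1)`. -/
structure FSG (α : Type) [Fintype α] (m : ℕ) where
  δ : Fin (m + 1) → α → Fin (m + 1)
  bet : Fin (m + 1) → α → ℚ
  bet_nonneg : ∀ q a, 0 ≤ bet q a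
  bet_sum : ∀ q, ∑ a, bet q a = 1
  q₀ : Fin (m + 1)

namespace FSG

variable {α : Type} [Fintype α] {m : ℕ}

/-- The state reached after reading the first `n` symbols of `X`. -/
def state (G : FSG α m) (X : ℕ → α) : ℕ → Fin (m + 1)
  | 0 => G.q₀
  | n + 1 => G.δ (G.state X n) (X n)

/-- The value of the `s`-gale of `G` on the prefix `X[:n]`. -/
noncomputable def capital (G : FSG α m) (s : ℝ) (X : ℕ → α) : ℕ → ℝ
  | 0 => 1
  | n + 1 => (Fintype.card α : ℝ) ^ s * (G.bet (G.state X n) (X n) : ℝ) * G.capital s X n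

/-- The `s`-gale of `G` succeeds on `X` : `limsup_n d(X[:n]) = ∞`. -/
def Succeeds (G : FSG α m) (s : ℝ) (X : ℕ → α) : Prop :=
  ∀ C : ℝ, ∃ n, C < G.capital s X n

/-- The `s`-gale of `G` strongly succeeds on `X` : `liminf_n d(X[:n]) = ∞`. -/
def StrSucceeds (G : FSG α m) (s : ℝ) (X : ℕ → α) : Prop :=
  Tendsto (G.capital s X) atTop atTop

end FSG

/-- Finite-state dimension of a sequence. -/
noncomputable def dimFS {α : Type} [Fintype α] (X : ℕ → α) : ℝ :=
  sInf {s : ℝ | 0 ≤ s ∧ ∃ (m : ℕ) (G : FSG α m), G.Succeeds s X}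

/-- Finite-state strong dimension of a sequence. -/
noncomputable def DimFS {α : Type} [Fintype α] (X : ℕ → α) : ℝ :=
  sInf {s : ℝ | 0 ≤ s ∧ ∃ (m : ℕ) (G : FSG α m), G.StrSucceeds s X}

/-- A finite-state relative gambler over input alphabet `α`, oracle alphabet `β`,
oracle window length `ℓ`, with state space `Fin (m+1)`. -/
structure FSRG (α β : Type) [Fintype α] [Fintype β] (ℓ m : ℕ) where
  δ : Fin (m + 1) → (Fin ℓ → β) → α → Fin (m + 1)
  bet : Fin (m + 1) → (Fin ℓ → β) → α → ℚ
  bet_nonneg : ∀ q y a, 0 ≤ bet q y a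
  bet_sum : ∀ q y, ∑ a, bet q y a = 1
  q₀ : Fin (m + 1)

namespace FSRG

variable {α β : Type} [Fintype α] [Fintype β] {ℓ m : ℕ}

/-- The state reached after reading the first `n` symbols of `X`, with oracle `Y`
(the oracle window at step `i` being `Y[i:i+ℓ]`). -/
def state (G : FSRG α β ℓ m) (Y : ℕ → β) (X : ℕ → α) : ℕ → Fin (m + 1)
  | 0 => G.q₀
  | n + 1 => G.δ (G.state Y X n) (fun j => Y (n + j.val)) (X n)

/-- The value of the `s`-gale of `G` with oracle `Y` on the prefix `X[:n]`. -/
noncomputable def capital (G : FSRG α β ℓ m) (s : ℝ) (Y : ℕ → β) (X : ℕ → α) : ℕ → ℝ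
  | 0 => 1
  | n + 1 =>
      (Fintype.card α : ℝ) ^ s * (G.bet (G.state Y X n) (fun j => Y (n + j.val)) (X n) : ℝ) *
        G.capital s Y X n

/-- Success: `limsup_n d(X[:n]) = ∞`. -/
def Succeeds (G : FSRG α β ℓ m) (s : ℝ) (Y : ℕ → β) (X : ℕ → α) : Prop :=
  ∀ C : ℝ, ∃ n, C < G.capital s Y X n

/-- Strong success: `liminf_n d(X[:n]) = ∞`. -/
def StrSucceeds (G : FSRG α β ℓ m) (s : ℝ) (Y : ℕ → β) (X : ℕ → α) : Prop :=
  Tendsto (G.capital s Y X) atTop atTop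

end FSRG

/-- Finite-state relative dimension `dim_FS^Y(X)`. -/
noncomputable def dimFSRel {α β : Type} [Fintype α] [Fintype β] (X : ℕ → α) (Y : ℕ → β) : ℝ :=
  sInf {s : ℝ | 0 ≤ s ∧ ∃ (ℓ m : ℕ) (G : FSRG α β ℓ m), G.Succeeds s Y X}

/-- Finite-state relative strong dimension `Dim_FS^Y(X)`. -/
noncomputable def DimFSRel {α β : Type} [Fintype α] [Fintype β] (X : ℕ → α) (Y : ℕ → β) : ℝ :=
  sInf {s : ℝ | 0 ≤ s ∧ ∃ (ℓ m : ℕ) (G : FSRG α β ℓ m), G.StrSucceeds s Y X}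

open Classical in
/-- `N(u,x;v,y)`: the number of indices `i < k` such that the `i`-th disjoint block of
length `ℓ` of `X` equals `u` and that of `Y` equals `v`. -/
noncomputable def blockCount {α β : Type} (X : ℕ → α) (Y : ℕ → β) (ℓ k : ℕ)
    (u : Fin ℓ → α) (v : Fin ℓ → β) : ℕ :=
  ((Finset.range k).filter fun i =>
    (∀ j : Fin ℓ, X (i * ℓ + j.val) = u j) ∧ ∀ j : Fin ℓ, Y (i * ℓ + j.val) = v j).card

/-- The `ℓ`-length conditional block entropy `H_ℓ(X[:kℓ] | Y[:kℓ])`.  (Terms with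
`N(u,x;v,y) = 0` vanish since `0 · log 0 = 0` under Mathlib's convention `log 0 = 0`.) -/
noncomputable def condBlockEntropy {α β : Type} [Fintype α] [Fintype β]
    (X : ℕ → α) (Y : ℕ → β) (ℓ k : ℕ) : ℝ :=
  -(1 / (ℓ * Real.log (Fintype.card α))) *
    ∑ v : Fin ℓ → β, ∑ u : Fin ℓ → α,
      ((blockCount X Y ℓ k u v : ℝ) / k) *
        Real.log ((blockCount X Y ℓ k u v : ℝ) /
          ∑ u' : Fin ℓ → α, (blockCount X Y ℓ k u' v : ℝ))

/-- `H_ℓ(X|Y) = liminf_{k → ∞} H_ℓ(X[:kℓ] | Y[:kℓ])`. -/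
noncomputable def relBlockEntropyAt {α β : Type} [Fintype α] [Fintype β]
    (X : ℕ → α) (Y : ℕ → β) (ℓ : ℕ) : ℝ :=
  liminf (fun k => condBlockEntropy X Y ℓ k) atTop

/-- `H(X|Y) = inf_{ℓ ≥ 1} H_ℓ(X|Y)`. -/
noncomputable def relBlockEntropy {α β : Type} [Fintype α] [Fintype β]
    (X : ℕ → α) (Y : ℕ → β) : ℝ :=
  ⨅ ℓ : ℕ, relBlockEntropyAt X Y (ℓ + 1)

/-- `H̄_ℓ(X|Y) = limsup_{k → ∞} H_ℓ(X[:kℓ] | Y[:kℓ])`. -/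
noncomputable def relUpperBlockEntropyAt {α β : Type} [Fintype α] [Fintype β]
    (X : ℕ → α) (Y : ℕ → β) (ℓ : ℕ) : ℝ :=
  limsup (fun k => condBlockEntropy X Y ℓ k) atTop

/-- `H̄(X|Y) = inf_{ℓ ≥ 1} H̄_ℓ(X|Y)`. -/
noncomputable def relUpperBlockEntropy {α β : Type} [Fintype α] [Fintype β]
    (X : ℕ → α) (Y : ℕ → β) : ℝ :=
  ⨅ ℓ : ℕ, relUpperBlockEntropyAt X Y (ℓ + 1)

/-- The arithmetic-progression subsequence `A_{d,a}(X) = X[a] X[a+d] X[a+2d] …`. -/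
def AP {α : Type} (X : ℕ → α) (d a : ℕ) : ℕ → α := fun n => X (a + n * d)

/-- The product sequence of a family of sequences: its `n`-th symbol is the tuple
of the `n`-th symbols. -/
def prodSeq {α ι : Type} (Ys : ι → ℕ → α) : ℕ → ι → α := fun n i => Ys i n

/-- Relative dimension with a finite family of oracle sequences, via the product sequence. -/
noncomputable def dimFSRelFam {α ι : Type} [Fintype α] [Fintype ι] [DecidableEq ι]
    (X : ℕ → α) (Ys : ι → ℕ → α) : ℝ :=
  dimFSRel X (prodSeq Ys)

/-- Relative strong dimension with a finite family of oracle sequences. -/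
noncomputable def DimFSRelFam {α ι : Type} [Fintype α] [Fintype ι] [DecidableEq ι]
    (X : ℕ → α) (Ys : ι → ℕ → α) : ℝ :=
  DimFSRel X (prodSeq Ys)

/-- The interleaving `Y₀ ⊕ ⋯ ⊕ Y_{n-1}`: the `i`-th symbol is `Y_{i mod n}[⌊i/n⌋]`. -/
def interleave {α : Type} {n : ℕ} (hn : 0 < n) (Ys : Fin n → ℕ → α) : ℕ → α :=
  fun i => Ys ⟨i % n, Nat.mod_lt i hn⟩ (i / n)

/-- The interleaving `A ⊕ B` of two sequences. -/
def interleave2 {α : Type} (A B : ℕ → α) : ℕ → α :=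
  fun i => if i % 2 = 0 then A (i / 2) else B (i / 2)



/-- Block endpoints. -/
def tb : ℕ → ℕ
  | 0 => 0
  | k + 1 => (k + 1) * (tb k + 1)

lemma tb_lt_succ (k : ℕ) : tb k < tb (k+1) := by
  show tb k < (k+1) * (tb k + 1)
  nlinarith [Nat.zero_le (tb k), Nat.zero_le k]

lemma tb_strictMono : StrictMono tb := strictMono_nat_of_lt_succ tb_lt_succ

lemma self_le_tb (k : ℕ) : k ≤ tb k := by
  induction k with
  | zero => simp [tb]
  | succ n ih => calc n + 1 ≤ tb n + 1 := by omega
                      _ ≤ tb (n+1) := tb_lt_succ n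

/-- Index of the block containing `i`. -/
def Kf (i : ℕ) : ℕ := Nat.findGreatest (fun k => tb k ≤ i) i

lemma Kf_eq {k i : ℕ} (h1 : tb k ≤ i) (h2 : i < tb (k+1)) : Kf i = k := by
  rw [Kf, Nat.findGreatest_eq_iff]
  refine ⟨le_trans (self_le_tb k) h1, fun _ => h1, fun n hn hni hP => ?_⟩
  exact absurd hP (by push_neg; exact lt_of_lt_of_le h2 (tb_strictMono.monotone hn))

/-- The active track at pair-index `i`. -/
def Atrk (i : ℕ) : ℕ := Kf i % 2

lemma Atrk_lt (i : ℕ) : Atrk i < 2 := Nat.mod_lt _ (by norm_num)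

/-- If `i < tb (k+1)` and `Atrk i` has parity different from `k`, then `i < tb k`. -/
lemma lt_tb_of_Atrk_ne {i k : ℕ} (hi : i < tb (k+1)) (h : Atrk i ≠ k % 2) : i < tb k := by
  by_contra hc
  push_neg at hc
  have : Kf i = k := Kf_eq hc hi
  exact h (by rw [Atrk, this])

/-- KEY: lower bound `C < β^(n-o) * c^o` under block conditions. -/
lemma key_bound (β c : ℝ) (hβ : 1 < β) (hc : 0 < c) (hc1 : c ≤ 1)
    {o k : ℕ} (ho : o ≤ tb k) (hk : 1 ≤ β ^ k * c) {C : ℝ} (hC : C < β ^ (k+1)) :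
    C < β ^ (tb (k+1) - o) * c ^ o := by
  have hβ0 : (0:ℝ) < β := by linarith
  have hn : tb (k+1) = (k+1) * (tb k + 1) := rfl
  have e1 : (k+1) * (tb k + 1) = k * tb k + tb k + k + 1 := by ring
  have h1 : k + 1 + k * o ≤ tb (k+1) - o := by
    have h2 : k * o ≤ k * tb k := Nat.mul_le_mul_left _ ho
    omega
  set A := (tb (k+1) - o) - (k+1+k*o) with hA
  have hAd : tb (k+1) - o = k + 1 + A + k * o := by omega
  calc C < β ^ (k+1) := hC
    _ = β ^ (k+1) * 1 * 1 := by ring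
    _ ≤ β ^ (k+1) * β ^ A * (β ^ k * c) ^ o := by
        gcongr
        · exact one_le_pow₀ (le_of_lt hβ)
        · exact one_le_pow₀ hk
    _ = β ^ (tb (k+1) - o) * c ^ o := by
        rw [hAd, pow_add, pow_add, mul_pow, ← pow_mul]; ring

section Master
open Finset

namespace FSG
variable {α : Type} [Fintype α] {m : ℕ}

lemma bet_le_one (G : FSG α m) (q : Fin (m+1)) (a : α) : G.bet q a ≤ 1 := by
  have h := Finset.single_le_sum (f := fun a => G.bet q a)
    (fun a _ => G.bet_nonneg q a) (Finset.mem_univ a)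
  rw [G.bet_sum q] at h; exact h

/-- State after reading a reversed word (head = last symbol read). -/
def rstate (G : FSG α m) : List α → Fin (m+1)
  | [] => G.q₀
  | a :: w => G.δ (G.rstate w) a

/-- Capital after reading a reversed word. -/
noncomputable def rcap (G : FSG α m) (s : ℝ) : List α → ℝ
  | [] => 1
  | a :: w => (Fintype.card α : ℝ) ^ s * (G.bet (G.rstate w) a : ℝ) * G.rcap s w

/-- Reversed prefix of a sequence. -/
def rpre (X : ℕ → α) : ℕ → List α
  | 0 => []
  | n + 1 => X n :: rpre X n

lemma rstate_rpre (G : FSG α m) (X : ℕ → α) (n : ℕ) :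
    G.rstate (rpre X n) = G.state X n := by
  induction n with
  | zero => rfl
  | succ n ih => simp [rpre, rstate, state, ih]

lemma rcap_rpre (G : FSG α m) (s : ℝ) (X : ℕ → α) (n : ℕ) :
    G.rcap s (rpre X n) = G.capital s X n := by
  induction n with
  | zero => rfl
  | succ n ih => simp [rpre, rcap, capital, ih, rstate_rpre]

lemma rcap_nonneg (G : FSG α m) {s : ℝ} (hs : 0 ≤ (Fintype.card α : ℝ))
    (w : List α) : 0 ≤ G.rcap s w := by
  induction w with
  | nil => norm_num [rcap]
  | cons a w ih =>
      have h1 : (0:ℝ) ≤ ((G.bet (G.rstate w) a : ℚ) : ℝ) := by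
        exact_mod_cast G.bet_nonneg (G.rstate w) a
      have h2 : (0:ℝ) ≤ (Fintype.card α : ℝ) ^ s := Real.rpow_nonneg hs s
      simpa [rcap] using mul_nonneg (mul_nonneg h2 h1) ih

end FSG

/-- Bundled binary gamblers. -/
abbrev Gb : Type := Σ m : ℕ, FSG (Fin 2) m

instance (m : ℕ) : Countable (FSG (Fin 2) m) := by
  have h : Function.Injective (fun G : FSG (Fin 2) m => (G.δ, G.bet, G.q₀)) := by
    rintro ⟨d1, b1, _, _, q1⟩ ⟨d2, b2, _, _, q2⟩ h
    simp only [Prod.mk.injEq] at h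
    obtain ⟨h1, h2, h3⟩ := h
    subst h1; subst h2; subst h3; rfl
  exact h.countable

def trivialG : FSG (Fin 2) 0 where
  δ _ _ := 0
  bet _ _ := 1/2
  bet_nonneg _ _ := by norm_num
  bet_sum _ := by norm_num [Fin.sum_univ_two]
  q₀ := 0

instance : Nonempty Gb := ⟨⟨0, trivialG⟩⟩

noncomputable def gEnum : ℕ → Gb := (exists_surjective_nat Gb).choose

lemma gEnum_surj : Function.Surjective gEnum := (exists_surjective_nat Gb).choose_spec

lemma card_fin2 : ((Fintype.card (Fin 2) : ℝ)) = 2 := by simp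

lemma rcap_one_cons {m : ℕ} (G : FSG (Fin 2) m) (a : Fin 2) (w : List (Fin 2)) :
    G.rcap 1 (a :: w) = 2 * (G.bet (G.rstate w) a : ℝ) * G.rcap 1 w := by
  simp [FSG.rcap, card_fin2, Real.rpow_one]

lemma rcap_one_le_pow {m : ℕ} (G : FSG (Fin 2) m) (w : List (Fin 2)) :
    G.rcap 1 w ≤ 2 ^ w.length := by
  induction w with
  | nil => norm_num [FSG.rcap]
  | cons a w ih =>
      rw [rcap_one_cons]
      have hb : ((G.bet (G.rstate w) a : ℚ) : ℝ) ≤ 1 := by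
        exact_mod_cast G.bet_le_one (G.rstate w) a
      have hb0 : (0:ℝ) ≤ ((G.bet (G.rstate w) a : ℚ) : ℝ) := by
        exact_mod_cast G.bet_nonneg (G.rstate w) a
      have h0 : (0:ℝ) ≤ G.rcap 1 w := G.rcap_nonneg (by norm_num) w
      calc 2 * ((G.bet (G.rstate w) a : ℚ) : ℝ) * G.rcap 1 w
          ≤ 2 * 1 * (2 ^ w.length) := by
            apply mul_le_mul _ ih h0 (by norm_num)
            nlinarith
        _ = 2 ^ (a :: w).length := by simp [List.length_cons]; ring

lemma rcap_one_fair {m : ℕ} (G : FSG (Fin 2) m) (w : List (Fin 2)) :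
    G.rcap 1 (0 :: w) + G.rcap 1 (1 :: w) = 2 * G.rcap 1 w := by
  rw [rcap_one_cons, rcap_one_cons]
  have h : (G.bet (G.rstate w) 0 : ℝ) + (G.bet (G.rstate w) 1 : ℝ) = 1 := by
    have := G.bet_sum (G.rstate w)
    rw [Fin.sum_univ_two] at this
    exact_mod_cast congrArg (fun x : ℚ => (x : ℝ)) this
  linear_combination 2 * G.rcap 1 w * h

/-- The master martingale. -/
noncomputable def MM (w : List (Fin 2)) : ℝ :=
  ∑' k : ℕ, (1/2 : ℝ) ^ (k+1) * ((gEnum k).2.rcap 1 w)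

lemma MM_term_nonneg (w : List (Fin 2)) (k : ℕ) :
    0 ≤ (1/2 : ℝ) ^ (k+1) * ((gEnum k).2.rcap 1 w) :=
  mul_nonneg (by positivity) ((gEnum k).2.rcap_nonneg (by norm_num) w)

lemma MM_summable (w : List (Fin 2)) :
    Summable (fun k : ℕ => (1/2 : ℝ) ^ (k+1) * ((gEnum k).2.rcap 1 w)) := by
  have hle : ∀ k : ℕ, (1/2 : ℝ) ^ (k+1) * ((gEnum k).2.rcap 1 w)
      ≤ (1/2 : ℝ) ^ k * (2 ^ w.length) := by
    intro k
    have h1 : ((gEnum k).2).rcap 1 w ≤ 2 ^ w.length := rcap_one_le_pow _ w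
    have h0 : (0:ℝ) ≤ ((gEnum k).2).rcap 1 w := (gEnum k).2.rcap_nonneg (by norm_num) w
    have h2 : ((1:ℝ)/2) ^ (k+1) ≤ (1/2) ^ k := by
      apply pow_le_pow_of_le_one (by norm_num) (by norm_num) (by omega)
    exact mul_le_mul h2 h1 h0 (by positivity)
  exact Summable.of_nonneg_of_le (MM_term_nonneg w) hle
    ((summable_geometric_two).mul_right _)

lemma MM_nonneg (w : List (Fin 2)) : 0 ≤ MM w := tsum_nonneg (MM_term_nonneg w)

lemma MM_fair (w : List (Fin 2)) : MM (0 :: w) + MM (1 :: w) = 2 * MM w := by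
  rw [MM, MM, MM, ← Summable.tsum_add (MM_summable (0 :: w)) (MM_summable (1 :: w)),
    ← tsum_mul_left]
  congr 1
  funext k
  rw [← mul_add, rcap_one_fair]
  ring

lemma MM_cons_le (a : Fin 2) (w : List (Fin 2)) : MM (a :: w) ≤ 2 * MM w := by
  rw [← MM_fair w]
  have h0 := MM_nonneg (0 :: w)
  have h1 := MM_nonneg (1 :: w)
  fin_cases a <;> simp <;> linarith

end Master

section Xdef
open Finset

/-- Next bit: `0` on forced positions, otherwise greedily minimize `MM`. -/
noncomputable def choose1 (j : ℕ) (w : List (Fin 2)) : Fin 2 :=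
  if j % 2 ≠ Atrk (j / 2) then 0
  else if MM (0 :: w) ≤ MM (1 :: w) then 0 else 1

noncomputable def pre : ℕ → List (Fin 2)
  | 0 => []
  | n + 1 => choose1 n (pre n) :: pre n

noncomputable def Xseq (n : ℕ) : Fin 2 := choose1 n (pre n)

lemma rpre_Xseq (n : ℕ) : FSG.rpre Xseq n = pre n := by
  induction n with
  | zero => rfl
  | succ n ih => simp [FSG.rpre, pre, Xseq, ih]

lemma Xseq_forced {j : ℕ} (h : j % 2 ≠ Atrk (j / 2)) : Xseq j = 0 := by
  simp [Xseq, choose1, h]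

/-- Number of forced positions below `n`. -/
def Fct (n : ℕ) : ℕ := ((range n).filter (fun j => j % 2 ≠ Atrk (j / 2))).card

lemma Fct_succ (n : ℕ) :
    Fct (n+1) = Fct n + (if n % 2 ≠ Atrk (n / 2) then 1 else 0) := by
  rw [Fct, Fct, range_add_one, filter_insert]
  split
  · rw [Finset.card_insert_of_notMem (by simp)]
  · simp

lemma Fct_two_mul (i : ℕ) : Fct (2 * i) = i ∧ Fct (2 * i + 1) ≤ i + 1 := by
  induction i with
  | zero =>
      constructor
      · rfl
      · rw [show 2*0+1 = 0+1 by ring, Fct_succ]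
        have h0 : Fct 0 = 0 := rfl
        split <;> omega
  | succ n ih =>
      have h1 := Fct_succ (2 * n)
      have h2 := Fct_succ (2 * n + 1)
      have e1 : (2 * n) % 2 = 0 := by omega
      have e2 : (2 * n) / 2 = n := by omega
      have e3 : (2 * n + 1) % 2 = 1 := by omega
      have e4 : (2 * n + 1) / 2 = n := by omega
      have hA := Atrk_lt n
      have key : Fct (2 * n + 2) = Fct (2 * n) + 1 := by
        rw [show 2*n+2 = (2*n+1)+1 by ring, h2, h1, e1, e2, e3, e4]
        rcases (by omega : Atrk n = 0 ∨ Atrk n = 1) with h | h <;> simp [h]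
      constructor
      · rw [show 2*(n+1) = 2*n+2 by ring, key, ih.1]
      · rw [show 2*(n+1)+1 = (2*n+2)+1 by ring, Fct_succ, key, ih.1]
        split <;> omega

lemma Fct_le (n : ℕ) : Fct n ≤ n / 2 + 1 := by
  rcases Nat.even_or_odd n with ⟨i, hi⟩ | ⟨i, hi⟩
  · subst hi
    have := (Fct_two_mul i).1
    rw [show i + i = 2 * i by ring] at *
    omega
  · subst hi
    have := (Fct_two_mul i).2
    omega

lemma MM_pre_le (n : ℕ) : MM (pre n) ≤ 2 ^ (Fct n) := by
  induction n with
  | zero =>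
      have : MM (pre 0) = 1 := by
        rw [pre, MM]
        have : ∀ k : ℕ, (1/2:ℝ)^(k+1) * ((gEnum k).2.rcap 1 []) = (1/2:ℝ)^(k+1) := by
          intro k; simp [FSG.rcap]
        rw [tsum_congr this]
        rw [show (fun k : ℕ => (1/2:ℝ)^(k+1)) = fun k : ℕ => (1/2:ℝ)^k * (1/2) from by
          funext k; rw [pow_succ]]
        rw [tsum_mul_right, tsum_geometric_two]
        norm_num
      simp [this, Fct]
  | succ n ih =>
      rw [Fct_succ]
      by_cases h : n % 2 ≠ Atrk (n / 2)
      · have hx : pre (n+1) = (0 : Fin 2) :: pre n := by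
          simp [pre, choose1, h]
        rw [hx, if_pos h]
        calc MM ((0:Fin 2) :: pre n) ≤ 2 * MM (pre n) := MM_cons_le _ _
          _ ≤ 2 * 2 ^ Fct n := by linarith [MM_nonneg (pre n)]
          _ = 2 ^ (Fct n + 1) := by ring
      · rw [if_neg h]
        push_neg at h
        have hfair := MM_fair (pre n)
        have hx : MM (pre (n+1)) ≤ MM (pre n) := by
          show MM (choose1 n (pre n) :: pre n) ≤ MM (pre n)
          rw [choose1, if_neg (by simpa using h)]
          split
          · next hle => linarith [MM_nonneg ((1:Fin 2) :: pre n)]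
          · next hle => push_neg at hle; linarith [MM_nonneg ((0:Fin 2) :: pre n)]
        simpa using le_trans hx ih

end Xdef


section NoSuccess

lemma pre_length (n : ℕ) : (pre n).length = n := by
  induction n with
  | zero => rfl
  | succ n ih => simp [pre, ih]

lemma rcap_s_eq {m : ℕ} (G : FSG (Fin 2) m) (s : ℝ) (w : List (Fin 2)) :
    G.rcap s w = ((2:ℝ) ^ (s - 1)) ^ w.length * G.rcap 1 w := by
  have h2 : ((Fintype.card (Fin 2) : ℝ)) ^ s = (2:ℝ) ^ (s-1) * 2 := by
    rw [card_fin2]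
    have := Real.rpow_add (by norm_num : (0:ℝ) < 2) (s-1) 1
    rw [Real.rpow_one] at this
    rw [show s - 1 + 1 = s by ring] at this
    exact this
  induction w with
  | nil => simp [FSG.rcap]
  | cons a w ih =>
      show ((Fintype.card (Fin 2) : ℝ)) ^ s * (G.bet (G.rstate w) a : ℝ) * G.rcap s w = _
      rw [h2, ih, rcap_one_cons, List.length_cons, pow_succ]
      ring

lemma capital_Xseq_le {m : ℕ} (G : FSG (Fin 2) m) {k : ℕ} (hk : gEnum k = ⟨m, G⟩)
    {s : ℝ} (hs : s ≤ 1/2) (n : ℕ) : G.capital s Xseq n ≤ 2 ^ (k+2) := by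
  have hterm := Summable.le_tsum (MM_summable (pre n)) k (fun i _ => MM_term_nonneg (pre n) i)
  rw [hk] at hterm
  have hterm' : (1/2 : ℝ) ^ (k+1) * (G.rcap 1 (pre n)) ≤ MM (pre n) := hterm
  have hcap1 : G.rcap 1 (pre n) ≤ 2 ^ (k+1) * 2 ^ (Fct n) := by
    have hMM := MM_pre_le n
    have hpos : (0:ℝ) < (1/2 : ℝ) ^ (k+1) := by positivity
    have h1 : G.rcap 1 (pre n) ≤ MM (pre n) / (1/2 : ℝ) ^ (k+1) := by
      rw [le_div_iff₀ hpos]; linarith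
    calc G.rcap 1 (pre n) ≤ MM (pre n) / (1/2 : ℝ) ^ (k+1) := h1
      _ ≤ 2 ^ (Fct n) / (1/2 : ℝ) ^ (k+1) := by
          gcongr
      _ = 2 ^ (k+1) * 2 ^ (Fct n) := by
          rw [div_eq_mul_inv, ← inv_pow]
          norm_num [mul_comm]
  have hcapeq : G.capital s Xseq n = ((2:ℝ) ^ (s-1)) ^ n * G.rcap 1 (pre n) := by
    rw [← G.rcap_rpre s Xseq n, rpre_Xseq, rcap_s_eq, pre_length]
  have hb0 : (0:ℝ) ≤ ((2:ℝ) ^ (s-1)) ^ n := by positivity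
  have e1 : ((2:ℝ) ^ (s-1)) ^ n = (2:ℝ) ^ ((s-1) * n) := by
    rw [← Real.rpow_natCast ((2:ℝ) ^ (s-1)) n, ← Real.rpow_mul (by norm_num)]
  have e2 : ((2:ℝ)) ^ (Fct n) ≤ (2:ℝ) ^ ((n:ℝ)/2 + 1) := by
    have hc : (((n/2 + 1 : ℕ)) : ℝ) ≤ (n:ℝ)/2 + 1 := by
      have h := Nat.div_mul_le_self n 2
      have h' : ((n/2 : ℕ) : ℝ) * 2 ≤ (n : ℝ) := by exact_mod_cast h
      push_cast
      linarith
    calc ((2:ℝ)) ^ (Fct n) ≤ (2:ℝ) ^ (n/2 + 1 : ℕ) :=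
          pow_le_pow_right₀ one_le_two (Fct_le n)
      _ = (2:ℝ) ^ (((n/2 + 1 : ℕ)) : ℝ) := (Real.rpow_natCast 2 _).symm
      _ ≤ (2:ℝ) ^ ((n:ℝ)/2 + 1) := Real.rpow_le_rpow_of_exponent_le one_le_two hc
  have e3 : (2:ℝ) ^ ((s-1) * n) * (2:ℝ) ^ ((n:ℝ)/2 + 1) ≤ 2 := by
    rw [← Real.rpow_add (by norm_num : (0:ℝ) < 2)]
    have hexp : (s-1) * n + ((n:ℝ)/2 + 1) ≤ 1 := by
      have hn0 : (0:ℝ) ≤ (n:ℝ) := Nat.cast_nonneg n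
      nlinarith
    calc (2:ℝ) ^ ((s-1) * n + ((n:ℝ)/2 + 1)) ≤ (2:ℝ) ^ (1:ℝ) :=
          Real.rpow_le_rpow_of_exponent_le one_le_two hexp
      _ = 2 := Real.rpow_one 2
  have hr0 : (0:ℝ) ≤ G.rcap 1 (pre n) := G.rcap_nonneg (by norm_num) (pre n)
  calc G.capital s Xseq n = ((2:ℝ) ^ (s-1)) ^ n * G.rcap 1 (pre n) := hcapeq
    _ ≤ ((2:ℝ) ^ (s-1)) ^ n * (2 ^ (k+1) * 2 ^ (Fct n)) := by
        exact mul_le_mul_of_nonneg_left hcap1 hb0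
    _ = 2 ^ (k+1) * (((2:ℝ) ^ (s-1)) ^ n * 2 ^ (Fct n)) := by ring
    _ ≤ 2 ^ (k+1) * ((2:ℝ) ^ ((s-1) * n) * (2:ℝ) ^ ((n:ℝ)/2 + 1)) := by
        rw [e1]
        apply mul_le_mul_of_nonneg_left _ (by positivity)
        exact mul_le_mul_of_nonneg_left e2 (by positivity)
    _ ≤ 2 ^ (k+1) * 2 := mul_le_mul_of_nonneg_left e3 (by positivity)
    _ = 2 ^ (k+2) := by ring

lemma no_success {m : ℕ} (G : FSG (Fin 2) m) {s : ℝ} (hs : s ≤ 1/2) :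
    ¬ G.Succeeds s Xseq := by
  obtain ⟨k, hk⟩ := gEnum_surj ⟨m, G⟩
  intro hsucc
  obtain ⟨n, hn⟩ := hsucc (2 ^ (k+2))
  exact absurd hn (not_lt.mpr (capital_Xseq_le G hk hs n))

end NoSuccess


section Success
open Finset

lemma fin2_cases (a : Fin 2) : a = 0 ∨ a = 1 := by revert a; decide

/-- Number of ones in `Y[:n]`. -/
def onesCnt (Y : ℕ → Fin 2) (n : ℕ) : ℕ := ((range n).filter (fun i => Y i = 1)).card

lemma onesCnt_le (Y : ℕ → Fin 2) (n : ℕ) : onesCnt Y n ≤ n := by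
  calc onesCnt Y n ≤ (range n).card := Finset.card_filter_le _ _
    _ = n := Finset.card_range n

lemma onesCnt_succ (Y : ℕ → Fin 2) (n : ℕ) :
    onesCnt Y (n+1) = onesCnt Y n + (if Y n = 1 then 1 else 0) := by
  rw [onesCnt, onesCnt, range_add_one, filter_insert]
  split
  · rw [Finset.card_insert_of_notMem (by simp)]
  · simp

lemma prod_uv (Y : ℕ → Fin 2) (u v : ℝ) (n : ℕ) :
    ∏ i ∈ range n, (if Y i = 0 then u else v)
      = u ^ (n - onesCnt Y n) * v ^ (onesCnt Y n) := by
  induction n with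
  | zero => simp [onesCnt]
  | succ n ih =>
      rw [prod_range_succ, ih, onesCnt_succ]
      have hle := onesCnt_le Y n
      rcases fin2_cases (Y n) with h | h
      · rw [if_pos h, if_neg (by simp [h]), show n + 1 - (onesCnt Y n + 0) =
          (n - onesCnt Y n) + 1 by omega, pow_succ]
        ring_nf
      · rw [if_neg (by simp [h]), if_pos h, show n + 1 - (onesCnt Y n + 1) =
          n - onesCnt Y n by omega, pow_succ]
        ring_nf

lemma exists_good_k (β c : ℝ) (hβ : 1 < β) (hc : 0 < c) (C : ℝ) (p : ℕ) :
    ∃ k, k % 2 = p % 2 ∧ 1 ≤ β ^ k * c ∧ C < β ^ (k+1) := by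
  have ht : Filter.Tendsto (fun k : ℕ => β ^ k) Filter.atTop Filter.atTop :=
    tendsto_pow_atTop_atTop_of_one_lt hβ
  obtain ⟨N, hN⟩ := (ht.eventually_ge_atTop (max (1/c) (C+1))).exists_forall_of_atTop
  refine ⟨2 * N + p % 2, by omega, ?_, ?_⟩
  · have h1 : 1/c ≤ β ^ (2*N + p % 2) := le_trans (le_max_left _ _) (hN _ (by omega))
    rw [div_le_iff₀ hc] at h1
    linarith
  · have h1 : C + 1 ≤ β ^ (2*N + p % 2) := le_trans (le_max_right _ _) (hN _ (by omega))
    have h2 : β ^ (2*N + p % 2) ≤ β ^ (2*N + p % 2 + 1) :=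
      pow_le_pow_right₀ (le_of_lt hβ) (by omega)
    linarith

lemma capital_unbounded {u v c : ℝ} (hu : 1 < u) (hc : 0 < c) (hc1 : c ≤ 1) (hvc : c ≤ v)
    (Y : ℕ → Fin 2) (p : ℕ) (hones : ∀ k, k % 2 = p % 2 → onesCnt Y (tb (k+1)) ≤ tb k)
    (C : ℝ) :
    ∃ n, C < u ^ (n - onesCnt Y n) * v ^ (onesCnt Y n) := by
  obtain ⟨k, hkp, hk1, hkC⟩ := exists_good_k u c hu hc C p
  refine ⟨tb (k+1), ?_⟩
  have hb := key_bound u c hu hc hc1 (hones k hkp) hk1 hkC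
  refine lt_of_lt_of_le hb ?_
  exact mul_le_mul_of_nonneg_left (pow_le_pow_left₀ hc.le hvc _) (by positivity)

/-- Ones of the even AP track are controlled at odd block ends. -/
lemma ones_A0 (k : ℕ) (hk : k % 2 = 1 % 2) :
    onesCnt (AP Xseq 2 0) (tb (k+1)) ≤ tb k := by
  rw [onesCnt, ← Finset.card_range (tb k)]
  apply Finset.card_le_card
  intro i hi
  rw [Finset.mem_filter, Finset.mem_range] at hi
  rw [Finset.mem_range]
  obtain ⟨hilt, hione⟩ := hi
  have h1 : Xseq (2 * i) = 1 := by
    have : Xseq (0 + i * 2) = 1 := hione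
    rwa [show 0 + i * 2 = 2 * i by ring] at this
  have h2 : Atrk i = 0 := by
    by_contra hA
    have hf : (2 * i) % 2 ≠ Atrk ((2 * i) / 2) := by
      have e1 : (2 * i) % 2 = 0 := by omega
      have e2 : (2 * i) / 2 = i := by omega
      rw [e1, e2]
      have := Atrk_lt i
      omega
    rw [Xseq_forced hf] at h1
    exact absurd h1 (by decide)
  exact lt_tb_of_Atrk_ne hilt (by omega)

/-- Ones of the odd AP track are controlled at even block ends. -/
lemma ones_A1 (k : ℕ) (hk : k % 2 = 0 % 2) :
    onesCnt (fun i => Xseq (2 * i + 1)) (tb (k+1)) ≤ tb k := by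
  rw [onesCnt, ← Finset.card_range (tb k)]
  apply Finset.card_le_card
  intro i hi
  rw [Finset.mem_filter, Finset.mem_range] at hi
  rw [Finset.mem_range]
  obtain ⟨hilt, hione⟩ := hi
  have h1 : Xseq (2 * i + 1) = 1 := hione
  have h2 : Atrk i = 1 := by
    by_contra hA
    have hf : (2 * i + 1) % 2 ≠ Atrk ((2 * i + 1) / 2) := by
      have e1 : (2 * i + 1) % 2 = 1 := by omega
      have e2 : (2 * i + 1) / 2 = i := by omega
      rw [e1, e2]
      have := Atrk_lt i
      omega
    rw [Xseq_forced hf] at h1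
    exact absurd h1 (by decide)
  exact lt_tb_of_Atrk_ne hilt (by omega)

/-- One-state gambler betting `b` on `0`. -/
def simpleG (b : ℚ) (h0 : 0 ≤ b) (h1 : b ≤ 1) : FSG (Fin 2) 0 where
  δ _ _ := 0
  bet _ a := if a = 0 then b else 1 - b
  bet_nonneg q a := by split <;> linarith
  bet_sum q := by rw [Fin.sum_univ_two]; norm_num
  q₀ := 0

lemma simpleG_capital (b : ℚ) (h0 : 0 ≤ b) (h1 : b ≤ 1) (s : ℝ) (Y : ℕ → Fin 2) (n : ℕ) :
    (simpleG b h0 h1).capital s Y n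
      = ∏ i ∈ range n, (if Y i = 0 then (2:ℝ)^s * (b:ℝ) else (2:ℝ)^s * (1 - (b:ℝ))) := by
  induction n with
  | zero => simp [FSG.capital]
  | succ n ih =>
      rw [prod_range_succ, ← ih]
      show ((Fintype.card (Fin 2):ℝ))^s * _ * _ = _
      rw [card_fin2]
      rcases fin2_cases (Y n) with h | h <;>
        simp [simpleG, h] <;> push_cast <;> ring

/-- One-state relative gambler (ignores the oracle) betting `b` on `0`. -/
def simpleRG (b : ℚ) (h0 : 0 ≤ b) (h1 : b ≤ 1) : FSRG (Fin 2) (Fin 2) 0 0 where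
  δ _ _ _ := 0
  bet _ _ a := if a = 0 then b else 1 - b
  bet_nonneg q y a := by split <;> linarith
  bet_sum q y := by rw [Fin.sum_univ_two]; norm_num
  q₀ := 0

lemma simpleRG_capital (b : ℚ) (h0 : 0 ≤ b) (h1 : b ≤ 1) (s : ℝ)
    (Y X : ℕ → Fin 2) (n : ℕ) :
    (simpleRG b h0 h1).capital s Y X n
      = ∏ i ∈ range n, (if X i = 0 then (2:ℝ)^s * (b:ℝ) else (2:ℝ)^s * (1 - (b:ℝ))) := by
  induction n with
  | zero => simp [FSRG.capital]
  | succ n ih =>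
      rw [prod_range_succ, ← ih]
      show ((Fintype.card (Fin 2):ℝ))^s * _ * _ = _
      rw [card_fin2]
      rcases fin2_cases (X n) with h | h <;>
        simp [simpleRG, h] <;> push_cast <;> ring

/-- Two-state parity gambler: neutral on even positions, bets `b` on `0` at odd ones. -/
def parityG (b : ℚ) (h0 : 0 ≤ b) (h1 : b ≤ 1) : FSG (Fin 2) 1 where
  δ q _ := q + 1
  bet q a := if q = 0 then 1/2 else (if a = 0 then b else 1 - b)
  bet_nonneg q a := by
    split
    · norm_num
    · split <;> linarith
  bet_sum q := by
    rw [Fin.sum_univ_two]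
    split <;> norm_num
  q₀ := 0

open Fin.NatCast in
lemma fin2_cast_even (n : ℕ) : ((2*n : ℕ) : Fin 2) = 0 := by
  apply Fin.ext
  rw [Fin.val_natCast]
  omega

open Fin.NatCast in
lemma fin2_cast_odd (n : ℕ) : ((2*n+1 : ℕ) : Fin 2) = 1 := by
  apply Fin.ext
  rw [Fin.val_natCast]
  omega

open Fin.NatCast in
lemma parityG_state (b : ℚ) (h0 : 0 ≤ b) (h1 : b ≤ 1) (X : ℕ → Fin 2) (n : ℕ) :
    (parityG b h0 h1).state X n = ((n : ℕ) : Fin 2) := by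
  induction n with
  | zero => simp [FSG.state, parityG]
  | succ n ih =>
      rw [FSG.state, ih, parityG]
      push_cast
      ring

lemma parityG_capital (b : ℚ) (h0 : 0 ≤ b) (h1 : b ≤ 1) (s : ℝ) (X : ℕ → Fin 2) (n : ℕ) :
    (parityG b h0 h1).capital s X (2*n)
      = ∏ i ∈ range n, (if X (2*i+1) = 0
          then ((2:ℝ)^s * (1/2)) * ((2:ℝ)^s * (b:ℝ))
          else ((2:ℝ)^s * (1/2)) * ((2:ℝ)^s * (1 - (b:ℝ)))) := by
  induction n with
  | zero => simp [FSG.capital]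
  | succ n ih =>
      have e1 : 2*(n+1) = (2*n+1) + 1 := by ring
      rw [prod_range_succ, ← ih, e1]
      show ((Fintype.card (Fin 2):ℝ))^s * ((parityG b h0 h1).bet
          ((parityG b h0 h1).state X (2*n+1)) (X (2*n+1)) : ℝ) *
        (((Fintype.card (Fin 2):ℝ))^s * ((parityG b h0 h1).bet
          ((parityG b h0 h1).state X (2*n)) (X (2*n)) : ℝ) *
          (parityG b h0 h1).capital s X (2*n)) = _
      rw [card_fin2, parityG_state, parityG_state, fin2_cast_even, fin2_cast_odd]
      rcases fin2_cases (X (2*n+1)) with h | h <;>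
        simp [parityG, h] <;> push_cast <;> ring

end Success


section Final

lemma two_rpow_pos (s : ℝ) : (0:ℝ) < (2:ℝ) ^ s := Real.rpow_pos_of_pos (by norm_num) s

lemma one_le_two_rpow {s : ℝ} (hs : 0 ≤ s) : (1:ℝ) ≤ (2:ℝ) ^ s := by
  calc (1:ℝ) = (2:ℝ) ^ (0:ℝ) := (Real.rpow_zero 2).symm
    _ ≤ (2:ℝ) ^ s := Real.rpow_le_rpow_of_exponent_le one_le_two hs

lemma mem_S0 {s : ℝ} (hs : 0 < s) :
    0 ≤ s ∧ ∃ (m : ℕ) (G : FSG (Fin 2) m), G.Succeeds s (AP Xseq 2 0) := by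
  have h1 : (2:ℝ) ^ (-s) < 1 :=
    Real.rpow_lt_one_of_one_lt_of_neg one_lt_two (by linarith)
  obtain ⟨q, hq1, hq2⟩ := exists_rat_btwn h1
  have hq0 : (0:ℝ) < (q:ℝ) := lt_trans (two_rpow_pos (-s)) hq1
  have h0 : (0:ℚ) ≤ q := by exact_mod_cast hq0.le
  have h1' : q ≤ 1 := by exact_mod_cast hq2.le
  refine ⟨hs.le, 0, simpleG q h0 h1', ?_⟩
  intro C
  have hinv : (2:ℝ) ^ s * (2:ℝ) ^ (-s) = 1 := by
    rw [← Real.rpow_add (by norm_num)]; simp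
  have hu : (1:ℝ) < (2:ℝ)^s * (q:ℝ) := by
    calc (1:ℝ) = (2:ℝ)^s * (2:ℝ)^(-s) := hinv.symm
      _ < (2:ℝ)^s * (q:ℝ) := by
          exact mul_lt_mul_of_pos_left hq1 (two_rpow_pos s)
  have hc : (0:ℝ) < 1 - (q:ℝ) := by linarith
  have hc1 : 1 - (q:ℝ) ≤ 1 := by linarith
  have hvc : 1 - (q:ℝ) ≤ (2:ℝ)^s * (1 - (q:ℝ)) := by
    nlinarith [one_le_two_rpow hs.le]
  obtain ⟨n, hn⟩ := capital_unbounded hu hc hc1 hvc (AP Xseq 2 0) 1 ones_A0 C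
  refine ⟨n, ?_⟩
  rw [simpleG_capital, prod_uv]
  exact hn

lemma dim_A0 : dimFS (AP Xseq 2 0) = 0 := by
  unfold dimFS
  have hbdd : BddBelow {s : ℝ | 0 ≤ s ∧ ∃ (m : ℕ) (G : FSG (Fin 2) m),
      G.Succeeds s (AP Xseq 2 0)} := ⟨0, fun s hs => hs.1⟩
  have hne : Set.Nonempty {s : ℝ | 0 ≤ s ∧ ∃ (m : ℕ) (G : FSG (Fin 2) m),
      G.Succeeds s (AP Xseq 2 0)} := ⟨1, mem_S0 one_pos⟩
  apply le_antisymm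
  · apply le_of_forall_pos_le_add
    intro ε hε
    simpa using csInf_le hbdd (mem_S0 hε)
  · exact le_csInf hne fun s hs => hs.1

lemma AP1_eq : AP Xseq 2 1 = fun i => Xseq (2*i+1) := by
  funext i
  show Xseq (1 + i * 2) = Xseq (2*i+1)
  congr 1
  ring

lemma mem_S1 {s : ℝ} (hs : 0 < s) :
    0 ≤ s ∧ ∃ (ℓ m : ℕ) (G : FSRG (Fin 2) (Fin 2) ℓ m),
      G.Succeeds s (AP Xseq 2 0) (AP Xseq 2 1) := by
  have h1 : (2:ℝ) ^ (-s) < 1 :=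
    Real.rpow_lt_one_of_one_lt_of_neg one_lt_two (by linarith)
  obtain ⟨q, hq1, hq2⟩ := exists_rat_btwn h1
  have hq0 : (0:ℝ) < (q:ℝ) := lt_trans (two_rpow_pos (-s)) hq1
  have h0 : (0:ℚ) ≤ q := by exact_mod_cast hq0.le
  have h1' : q ≤ 1 := by exact_mod_cast hq2.le
  refine ⟨hs.le, 0, 0, simpleRG q h0 h1', ?_⟩
  intro C
  have hinv : (2:ℝ) ^ s * (2:ℝ) ^ (-s) = 1 := by
    rw [← Real.rpow_add (by norm_num)]; simp
  have hu : (1:ℝ) < (2:ℝ)^s * (q:ℝ) := by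
    calc (1:ℝ) = (2:ℝ)^s * (2:ℝ)^(-s) := hinv.symm
      _ < (2:ℝ)^s * (q:ℝ) := by
          exact mul_lt_mul_of_pos_left hq1 (two_rpow_pos s)
  have hc : (0:ℝ) < 1 - (q:ℝ) := by linarith
  have hc1 : 1 - (q:ℝ) ≤ 1 := by linarith
  have hvc : 1 - (q:ℝ) ≤ (2:ℝ)^s * (1 - (q:ℝ)) := by
    nlinarith [one_le_two_rpow hs.le]
  obtain ⟨n, hn⟩ := capital_unbounded hu hc hc1 hvc (fun i => Xseq (2*i+1)) 0 ones_A1 C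
  refine ⟨n, ?_⟩
  rw [simpleRG_capital, AP1_eq, prod_uv]
  exact hn

lemma dim_A1_rel : dimFSRel (AP Xseq 2 1) (AP Xseq 2 0) = 0 := by
  unfold dimFSRel
  have hbdd : BddBelow {s : ℝ | 0 ≤ s ∧ ∃ (ℓ m : ℕ) (G : FSRG (Fin 2) (Fin 2) ℓ m),
      G.Succeeds s (AP Xseq 2 0) (AP Xseq 2 1)} := ⟨0, fun s hs => hs.1⟩
  have hne : Set.Nonempty {s : ℝ | 0 ≤ s ∧ ∃ (ℓ m : ℕ) (G : FSRG (Fin 2) (Fin 2) ℓ m),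
      G.Succeeds s (AP Xseq 2 0) (AP Xseq 2 1)} := ⟨1, mem_S1 one_pos⟩
  apply le_antisymm
  · apply le_of_forall_pos_le_add
    intro ε hε
    simpa using csInf_le hbdd (mem_S1 hε)
  · exact le_csInf hne fun s hs => hs.1

lemma mem_SX {s : ℝ} (hs : 1/2 < s) :
    0 ≤ s ∧ ∃ (m : ℕ) (G : FSG (Fin 2) m), G.Succeeds s Xseq := by
  have hsneg : 1 - 2*s < 0 := by linarith
  have h1 : (2:ℝ) ^ (1 - 2*s) < 1 :=
    Real.rpow_lt_one_of_one_lt_of_neg one_lt_two hsneg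
  obtain ⟨q, hq1, hq2⟩ := exists_rat_btwn h1
  have hq0 : (0:ℝ) < (q:ℝ) := lt_trans (two_rpow_pos _) hq1
  have h0 : (0:ℚ) ≤ q := by exact_mod_cast hq0.le
  have h1' : q ≤ 1 := by exact_mod_cast hq2.le
  refine ⟨by linarith, 1, parityG q h0 h1', ?_⟩
  intro C
  have hE1 : (1:ℝ) ≤ (2:ℝ)^s := one_le_two_rpow (by linarith)
  have hkey : (2:ℝ)^s * (2:ℝ)^s * (2:ℝ)^(1-2*s) = 2 := by
    rw [← Real.rpow_add (by norm_num : (0:ℝ) < 2), ← Real.rpow_add (by norm_num : (0:ℝ) < 2),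
      show s + s + (1-2*s) = 1 by ring, Real.rpow_one]
  have h2lt : (2:ℝ) < (2:ℝ)^s * (2:ℝ)^s * (q:ℝ) := by
    calc (2:ℝ) = (2:ℝ)^s * (2:ℝ)^s * (2:ℝ)^(1-2*s) := hkey.symm
      _ < (2:ℝ)^s * (2:ℝ)^s * (q:ℝ) := by
          apply mul_lt_mul_of_pos_left hq1
          positivity
  have hu : (1:ℝ) < ((2:ℝ)^s * (1/2)) * ((2:ℝ)^s * (q:ℝ)) := by nlinarith
  have hc : (0:ℝ) < (1 - (q:ℝ))/2 := by linarith
  have hc1 : (1 - (q:ℝ))/2 ≤ 1 := by linarith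
  have hvc : (1 - (q:ℝ))/2 ≤ ((2:ℝ)^s * (1/2)) * ((2:ℝ)^s * (1 - (q:ℝ))) := by
    nlinarith
  obtain ⟨n, hn⟩ := capital_unbounded hu hc hc1 hvc (fun i => Xseq (2*i+1)) 0 ones_A1 C
  refine ⟨2*n, ?_⟩
  rw [parityG_capital, prod_uv]
  exact hn

lemma dim_X : dimFS Xseq = 1/2 := by
  unfold dimFS
  have hbdd : BddBelow {s : ℝ | 0 ≤ s ∧ ∃ (m : ℕ) (G : FSG (Fin 2) m),
      G.Succeeds s Xseq} := ⟨0, fun s hs => hs.1⟩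
  have hne : Set.Nonempty {s : ℝ | 0 ≤ s ∧ ∃ (m : ℕ) (G : FSG (Fin 2) m),
      G.Succeeds s Xseq} := ⟨1, mem_SX (by norm_num)⟩
  apply le_antisymm
  · apply le_of_forall_pos_le_add
    intro ε hε
    exact csInf_le hbdd (mem_SX (by linarith))
  · apply le_csInf hne
    rintro s ⟨hs0, m, G, hG⟩
    by_contra hlt
    push_neg at hlt
    exact no_success G hlt.le hG

end Final

/-- there is a binary sequence `X` with
`dim_FS(X) > (1/2)(dim_FS(A_{2,0}) + dim_FS^{A_{2,0}}(A_{2,1}))`; in fact with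
`dim_FS(X) = 1/2`, `dim_FS(A_{2,0}) = 0` and `dim_FS^{A_{2,0}}(A_{2,1}) = 0`. -/
theorem exists_dimFS_gt_avg_of_AP_dims :
    ∃ X : ℕ → Fin 2,
      dimFS X = 1 / 2 ∧
      dimFS (AP X 2 0) = 0 ∧
      dimFSRel (AP X 2 1) (AP X 2 0) = 0 ∧
      dimFS X > (1 / 2) * (dimFS (AP X 2 0) + dimFSRel (AP X 2 1) (AP X 2 0)) := by
  refine ⟨Xseq, dim_X, dim_A0, dim_A1_rel, ?_⟩
  rw [dim_X, dim_A0, dim_A1_rel]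
  norm_num
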